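/- Let W > 0, λ > 0, r > 2 and Z ∈ ℝ with λ(1 + W) < |Z| < rλW and W > 1/(r−1). Then β* = Soft(Z, rλ/(r−1))/(W − 1/(r−1)) satisfies λ < |β*| ≤ rλ and is a stationary point of f(β) = (W/2)β² − Zβ + p_SCAD(β; λ, r), where on (λ, rλ] the SCAD penalty has derivative p'_SCAD(θ) = (rλ − θ)/(r − 1). -/

import Mathlib

/-- Soft-thresholding operator. -/
noncomputable def soft (z γ : ℝ) : ℝ := Real.sign z * max (|z| - γ) 0

/-- SCAD penalty: λθ on [0, λ]; −(θ² − 2rλθ + λ²)/(2(r−1)) on (λ, rλ]; λ²(r+1)/2 beyond,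
so that p'(θ) = (rλ − θ)/(r − 1) on (λ, rλ]. -/
noncomputable def pSCAD (lam r θ : ℝ) : ℝ :=
  if θ ≤ lam then lam * θ
  else if θ ≤ r * lam then -(θ ^ 2 - 2 * r * lam * θ + lam ^ 2) / (2 * (r - 1))
  else lam ^ 2 * (r + 1) / 2

lemma scad_deriv_aux (lam r : ℝ) (hlam : 0 < lam) (hr1 : 0 < r - 1)
    (s b : ℝ) (hs : s = 1 ∨ s = -1) (h1 : lam < s * b) (h2 : s * b < r * lam) :
    HasDerivAt (fun β : ℝ => pSCAD lam r |β|) ((r * lam * s - b) / (r - 1)) b := by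
  have hs2 : s * s = 1 := by rcases hs with h | h <;> simp [h]
  have hg : HasDerivAt (fun β : ℝ => -(β ^ 2 - 2 * r * lam * (s * β) + lam ^ 2) / (2 * (r - 1)))
      ((r * lam * s - b) / (r - 1)) b := by
    have hp : HasDerivAt (fun β : ℝ => β ^ 2) (2 * b) b := by
      simpa using hasDerivAt_pow 2 b
    have hl : HasDerivAt (fun β : ℝ => 2 * r * lam * (s * β)) (2 * r * lam * s) b := by
      simpa [mul_assoc] using (hasDerivAt_id b).const_mul (2 * r * lam * s)
    have h := (((hp.sub hl).add_const (lam ^ 2)).neg).div_const (2 * (r - 1))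
    refine h.congr_deriv ?_
    rw [div_eq_div_iff (mul_ne_zero two_ne_zero (ne_of_gt hr1)) (ne_of_gt hr1)]
    ring
  apply hg.congr_of_eventuallyEq
  have hopen : IsOpen {β : ℝ | lam < s * β ∧ s * β < r * lam} := by
    have : {β : ℝ | lam < s * β ∧ s * β < r * lam}
        = (fun β : ℝ => s * β) ⁻¹' (Set.Ioo lam (r * lam)) := by
      ext β; simp [Set.mem_Ioo]
    rw [this]
    exact (isOpen_Ioo).preimage (continuous_const.mul continuous_id)
  have hmem : b ∈ {β : ℝ | lam < s * β ∧ s * β < r * lam} := ⟨h1, h2⟩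
  filter_upwards [hopen.mem_nhds hmem] with β hβ
  obtain ⟨hβ1, hβ2⟩ := hβ
  have habs : |β| = s * β := by
    have hpos : 0 < s * β := lt_trans hlam hβ1
    rcases hs with h | h
    · rw [h] at hpos ⊢; rw [one_mul] at hpos ⊢; exact abs_of_pos hpos
    · rw [h] at hpos ⊢
      have : β < 0 := by linarith
      rw [abs_of_neg this]; ring
  have hn1 : ¬ |β| ≤ lam := by rw [habs]; linarith
  have hn2 : |β| ≤ r * lam := by rw [habs]; linarith
  rw [pSCAD, if_neg hn1, if_pos hn2, habs]
  have hsq : (s * β) ^ 2 = β ^ 2 := by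
    have : (s * β) ^ 2 = (s * s) * β ^ 2 := by ring
    rw [this, hs2, one_mul]
  rw [hsq]

/-- SCAD coordinate update, middle regime: for λ(1+W) < |Z| < rλW and W > 1/(r−1),
β* = Soft(Z, rλ/(r−1))/(W − 1/(r−1)) satisfies λ < |β*| ≤ rλ and is a stationary point
of the SCAD-penalized coordinate objective. -/
theorem scad_stationary_middle (W lam r Z : ℝ) (hW : 0 < W) (hlam : 0 < lam)
    (hr : 2 < r) (hWr : 1 / (r - 1) < W)
    (hZlo : lam * (1 + W) < |Z|) (hZhi : |Z| < r * lam * W) :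
    lam < |soft Z (r * lam / (r - 1)) / (W - 1 / (r - 1))| ∧
      |soft Z (r * lam / (r - 1)) / (W - 1 / (r - 1))| ≤ r * lam ∧
      HasDerivAt (fun β => W / 2 * β ^ 2 - Z * β + pSCAD lam r |β|) 0
        (soft Z (r * lam / (r - 1)) / (W - 1 / (r - 1))) := by
  have hr1 : (0:ℝ) < r - 1 := by linarith
  have hD : 0 < W - 1 / (r - 1) := by linarith
  set γ : ℝ := r * lam / (r - 1) with hγdef
  set D : ℝ := W - 1 / (r - 1) with hDdef
  have hγD : γ + lam * D = lam * (1 + W) := by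
    rw [hγdef, hDdef]; field_simp; ring
  have hγD' : γ + r * lam * D = r * lam * W := by
    rw [hγdef, hDdef]; field_simp; ring
  have hZγ : γ < |Z| := by nlinarith [mul_pos hlam hD]
  have hZ0 : Z ≠ 0 := by
    intro h; rw [h, abs_zero] at hZγ
    have : 0 < γ := by positivity
    linarith
  set s : ℝ := Real.sign Z with hsdef
  have hs : s = 1 ∨ s = -1 := by
    rcases lt_or_gt_of_ne hZ0 with h | h
    · right; rw [hsdef, Real.sign_of_neg h]
    · left; rw [hsdef, Real.sign_of_pos h]
  have hsZ : s * |Z| = Z := by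
    rcases lt_or_gt_of_ne hZ0 with h | h
    · rw [hsdef, Real.sign_of_neg h, abs_of_neg h]; ring
    · rw [hsdef, Real.sign_of_pos h, abs_of_pos h]; ring
  have hs2 : s * s = 1 := by rcases hs with h | h <;> simp [h]
  have hsoft : soft Z γ = s * (|Z| - γ) := by
    rw [soft, ← hsdef, max_eq_left (by linarith)]
  set b : ℝ := soft Z γ / D with hbdef
  have hsb : s * b = (|Z| - γ) / D := by
    rw [hbdef, hsoft]
    field_simp
    rw [sq, hs2, one_mul]
  have hsb_pos : 0 < s * b := by
    rw [hsb]; exact div_pos (by linarith) hD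
  have habsb : |b| = s * b := by
    rcases hs with h | h
    · rw [h] at hsb_pos ⊢; rw [one_mul] at hsb_pos ⊢; exact abs_of_pos hsb_pos
    · rw [h] at hsb_pos ⊢
      have : b < 0 := by linarith
      rw [abs_of_neg this]; ring
  have h1 : lam < s * b := by
    rw [hsb, lt_div_iff₀ hD]; nlinarith
  have h2 : s * b < r * lam := by
    rw [hsb, div_lt_iff₀ hD]; nlinarith
  refine ⟨by rw [habsb]; exact h1, by rw [habsb]; exact le_of_lt h2, ?_⟩
  have hpen := scad_deriv_aux lam r hlam hr1 s b hs h1 h2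
  have hq : HasDerivAt (fun β : ℝ => W / 2 * β ^ 2 - Z * β) (W * b - Z) b := by
    have hp : HasDerivAt (fun β : ℝ => β ^ 2) (2 * b) b := by
      simpa using hasDerivAt_pow 2 b
    have h := (hp.const_mul (W / 2)).sub ((hasDerivAt_id b).const_mul Z)
    exact h.congr_deriv (by ring)
  have htot := hq.add hpen
  refine htot.congr_deriv ?_
  -- 0 = W * b - Z + (r * lam * s - b) / (r - 1)
  have hDb : (W - 1 / (r - 1)) * b = Z - s * (r * lam / (r - 1)) := by
    have h₁ : s * (s * b) = b := by rw [← mul_assoc, hs2, one_mul]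
    have h₂ : (W - 1 / (r - 1)) * b = D * (s * (s * b)) := by rw [h₁, hDdef]
    rw [h₂, hsb]
    have h₃ : D * (s * ((|Z| - γ) / D)) = s * (|Z| - γ) := by
      field_simp
    rw [h₃, hγdef]
    linear_combination hsZ
  have hne : r - 1 ≠ 0 := ne_of_gt hr1
  linear_combination hDb
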